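/- Let x* be an optimal solution to the linear program min c^T x subject to Ax ≤ b, Gx = h, and let (λ*, ν*) with λ* ≤ 0 be an optimal solution to the associated dual max b^T λ + h^T ν subject to A^T λ + G^T ν = c, λ ≤ 0. Then c^T x* = b^T λ* + h^T ν* (strong duality at the optimum implies equal objective values). -/

import Mathlib

open Matrix


variable {E : Type*} [NormedAddCommGroup E] [NormedSpace ℝ E] [FiniteDimensional ℝ E]
variable {ι : Type*} [Fintype ι] [DecidableEq ι]

/-- Conic Carathéodory. -/
theorem cone_caratheodory (v : ι → E) (s : Finset ι) :
    ∀ t : ι → ℝ, (∀ i, 0 ≤ t i) →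
    ∃ u ⊆ s, LinearIndependent ℝ (fun i : u => v i) ∧
      ∃ t' : ι → ℝ, (∀ i, 0 ≤ t' i) ∧ ∑ i ∈ u, t' i • v i = ∑ i ∈ s, t i • v i := by
  induction s using Finset.strongInduction with
  | _ s ih =>
    intro t ht
    by_cases hli : LinearIndependent ℝ (fun i : s => v i)
    · exact ⟨s, le_refl _, hli, t, ht, rfl⟩
    · obtain ⟨g, hg0, j, hgj⟩ := Fintype.not_linearIndependent_iff.1 hli
      classical
      have key : ∀ d : ι → ℝ, (∑ i ∈ s, d i • v i = 0) → (∃ i ∈ s, 0 < d i) →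
          ∃ u ⊆ s, LinearIndependent ℝ (fun i : u => v i) ∧
          ∃ t' : ι → ℝ, (∀ i, 0 ≤ t' i) ∧ ∑ i ∈ u, t' i • v i = ∑ i ∈ s, t i • v i := by
        intro d hdsum ⟨k, hks, hdk⟩
        set P : Finset ι := s.filter (fun i => 0 < d i) with hP
        have hPne : P.Nonempty := ⟨k, by simp [hP, hks, hdk]⟩
        obtain ⟨i₀, hi₀P, hi₀min⟩ := P.exists_min_image (fun i => t i / d i) hPne
        have hi₀s : i₀ ∈ s := (Finset.mem_filter.1 hi₀P).1
        have hdi₀ : 0 < d i₀ := (Finset.mem_filter.1 hi₀P).2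
        set r : ℝ := t i₀ / d i₀ with hr
        have hr0 : 0 ≤ r := div_nonneg (ht i₀) hdi₀.le
        have hnn : ∀ i ∈ s, 0 ≤ t i - r * d i := by
          intro i his
          by_cases hdi : 0 < d i
          · have hle := hi₀min i (Finset.mem_filter.2 ⟨his, hdi⟩)
            rw [div_le_div_iff₀ hdi₀ hdi] at hle
            have hrd : r * d i ≤ t i := by
              rw [hr, div_mul_eq_mul_div, div_le_iff₀ hdi₀]; linarith
            linarith
          · nlinarith [ht i, hr0, not_lt.1 hdi]
        set t'' : ι → ℝ := fun i => if i ∈ s.erase i₀ then t i - r * d i else 0 with ht''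
        have htval : ∀ i ∈ s.erase i₀, t'' i = t i - r * d i := by
          intro i hi; simp only [ht'']; exact if_pos hi
        have htval0 : ∀ i, i ∉ s.erase i₀ → t'' i = 0 := by
          intro i hi; simp only [ht'']; exact if_neg hi
        have ht''nn : ∀ i, 0 ≤ t'' i := by
          intro i; by_cases hi : i ∈ s.erase i₀
          · rw [htval i hi]; exact hnn i (Finset.mem_of_mem_erase hi)
          · rw [htval0 i hi]
        have hsum : ∑ i ∈ s.erase i₀, t'' i • v i = ∑ i ∈ s, t i • v i := by
          have h1 : ∑ i ∈ s.erase i₀, t'' i • v i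
              = ∑ i ∈ s.erase i₀, (t i - r * d i) • v i :=
            Finset.sum_congr rfl fun i hi => by rw [htval i hi]
          have h2 : ∑ i ∈ s, (t i - r * d i) • v i
              = (t i₀ - r * d i₀) • v i₀ + ∑ i ∈ s.erase i₀, (t i - r * d i) • v i :=
            (Finset.add_sum_erase s _ hi₀s).symm
          have h3 : t i₀ - r * d i₀ = 0 := by
            rw [hr, div_mul_cancel₀ _ (ne_of_gt hdi₀), sub_self]
          have h4 : ∑ i ∈ s, (t i - r * d i) • v i = ∑ i ∈ s, t i • v i := by
            simp only [sub_smul, smul_smul, Finset.sum_sub_distrib]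
            have : ∑ i ∈ s, (r * d i) • v i = r • ∑ i ∈ s, d i • v i := by
              rw [Finset.smul_sum]; exact Finset.sum_congr rfl fun i _ => by
                rw [smul_smul]
            rw [this, hdsum, smul_zero, sub_zero]
          rw [h1, ← h4, h2, h3, zero_smul, zero_add]
        obtain ⟨u, hu, hli', t3, ht3, hsum3⟩ :=
          ih (s.erase i₀) (Finset.erase_ssubset hi₀s) t'' ht''nn
        exact ⟨u, le_trans hu (Finset.erase_subset _ _), hli', t3, ht3, by rw [hsum3, hsum]⟩
      set d : ι → ℝ := fun i => if hi : i ∈ s then g ⟨i, hi⟩ else 0 with hd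
      have hdsum : ∑ i ∈ s, d i • v i = 0 := by
        rw [← hg0, ← Finset.sum_attach s (fun i => d i • v i)]
        exact Finset.sum_congr rfl fun i _ => by simp [hd, i.2]
      have hdj : d j ≠ 0 := by simp [hd, j.2, hgj]
      rcases lt_trichotomy (d j) 0 with hneg | hzero | hpos
      · have : ∑ i ∈ s, (-(d i)) • v i = 0 := by
          simp only [neg_smul, Finset.sum_neg_distrib, hdsum, neg_zero]
        exact key (fun i => -(d i)) this ⟨j, j.2, by simpa using neg_pos.2 hneg⟩
      · exact absurd hzero hdj
      · exact key d hdsum ⟨j, j.2, hpos⟩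

/-- The finitely generated cone. -/
def coneOf (v : ι → E) : Set E :=
  {z | ∃ t : ι → ℝ, (∀ i, 0 ≤ t i) ∧ z = ∑ i, t i • v i}

theorem coneOf_convex (v : ι → E) : Convex ℝ (coneOf v) := by
  rintro z ⟨t, ht, rfl⟩ w ⟨r, hr, rfl⟩ a b ha hb _
  refine ⟨fun i => a * t i + b * r i,
    fun i => add_nonneg (mul_nonneg ha (ht i)) (mul_nonneg hb (hr i)), ?_⟩
  rw [Finset.smul_sum, Finset.smul_sum, ← Finset.sum_add_distrib]
  exact Finset.sum_congr rfl fun i _ => by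
    rw [add_smul, smul_smul, smul_smul]

theorem coneOf_subcone_closed (v : ι → E) (u : Finset ι)
    (hli : LinearIndependent ℝ (fun i : u => v i)) :
    IsClosed {z : E | ∃ t : ι → ℝ, (∀ i, 0 ≤ t i) ∧ z = ∑ i ∈ u, t i • v i} := by
  classical
  let L : (u → ℝ) →ₗ[ℝ] E :=
    { toFun := fun t => ∑ i : u, t i • v i
      map_add' := fun t r => by
        simp [add_smul, Finset.sum_add_distrib]
      map_smul' := fun a t => by
        simp [smul_smul, Finset.smul_sum] }
  have hinj : LinearMap.ker L = ⊥ := by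
    rw [LinearMap.ker_eq_bot']
    intro g hg
    have := Fintype.linearIndependent_iff.1 hli g hg
    funext i; exact this i
  have hce := L.isClosedEmbedding_of_injective hinj
  have himg : {z : E | ∃ t : ι → ℝ, (∀ i, 0 ≤ t i) ∧ z = ∑ i ∈ u, t i • v i}
      = L '' {t : u → ℝ | ∀ i, 0 ≤ t i} := by
    ext z
    constructor
    · rintro ⟨t, ht, rfl⟩
      refine ⟨fun i => t i, fun i => ht i, ?_⟩
      show ∑ i : u, t (i:ι) • v i = ∑ i ∈ u, t i • v i
      exact Finset.sum_attach u (fun i => t i • v i)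
    · rintro ⟨t, ht, rfl⟩
      refine ⟨fun i => if hi : i ∈ u then t ⟨i, hi⟩ else 0, ?_, ?_⟩
      · intro i; by_cases hi : i ∈ u
        · simpa [hi] using ht ⟨i, hi⟩
        · simp [hi]
      · show L t = ∑ i ∈ u, _ • v i
        rw [← Finset.sum_attach u (fun i => _ • v i)]
        exact Finset.sum_congr rfl fun i _ => by simp [i.2]
  rw [himg]
  refine hce.isClosedMap _ ?_
  have : {t : u → ℝ | ∀ i, 0 ≤ t i} = ⋂ i, {t : u → ℝ | 0 ≤ t i} := by
    ext t; simp [Set.mem_iInter]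
  rw [this]
  exact isClosed_iInter fun i => isClosed_le continuous_const (continuous_apply i)

theorem coneOf_closed' (v : ι → E)
    (cara : ∀ t : ι → ℝ, (∀ i, 0 ≤ t i) →
      ∃ u ⊆ Finset.univ, LinearIndependent ℝ (fun i : u => v i) ∧
      ∃ t' : ι → ℝ, (∀ i, 0 ≤ t' i) ∧ ∑ i ∈ u, t' i • v i = ∑ i ∈ Finset.univ, t i • v i) :
    IsClosed (coneOf v) := by
  classical
  have hunion : coneOf v = ⋃ u : {u : Finset ι // LinearIndependent ℝ (fun i : u => v i)},
      {z : E | ∃ t : ι → ℝ, (∀ i, 0 ≤ t i) ∧ z = ∑ i ∈ (u : Finset ι), t i • v i} := by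
    ext z
    constructor
    · rintro ⟨t, ht, rfl⟩
      obtain ⟨u, -, hli, t', ht', hsum⟩ := cara t ht
      exact Set.mem_iUnion.2 ⟨⟨u, hli⟩, t', ht', hsum.symm⟩
    · rintro hz
      obtain ⟨u, t, ht, rfl⟩ := Set.mem_iUnion.1 hz
      refine ⟨fun i => if i ∈ (u : Finset ι) then t i else 0, ?_, ?_⟩
      · intro i; by_cases hi : i ∈ (u : Finset ι) <;> simp [hi, ht i]
      · rw [← Finset.sum_subset (Finset.subset_univ (u : Finset ι))]
        · exact Finset.sum_congr rfl fun i hi => by simp [hi]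
        · intro i _ hi; simp [hi]
  rw [hunion]
  exact isClosed_iUnion_of_finite fun u => coneOf_subcone_closed v u u.2

theorem cone_separation (v : ι → E) (p : E)
    (hclosed : IsClosed (coneOf v)) (hp : p ∉ coneOf v) :
    ∃ f : E →L[ℝ] ℝ, (∀ i, f (v i) ≤ 0) ∧ 0 < f p := by
  classical
  obtain ⟨f, r, hfr, hrp⟩ :=
    geometric_hahn_banach_closed_point (coneOf_convex v) hclosed hp
  have hmem : ∀ (s : ℝ), 0 ≤ s → ∀ i, s • v i ∈ coneOf v := by
    intro s hs i
    refine ⟨fun j => if j = i then s else 0, fun j => by positivity, ?_⟩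
    simp only [ite_smul, zero_smul]
    rw [Finset.sum_ite_eq' Finset.univ i (fun j => (s : ℝ) • v j)]
    simp
  have h0 : (0 : ℝ) < r := by
    have := hfr 0 ⟨fun _ => 0, fun _ => le_refl 0, by simp⟩
    simpa using this
  refine ⟨f, ?_, ?_⟩
  · intro i
    by_contra hpos
    push_neg at hpos
    have hs : (0:ℝ) ≤ r / f (v i) + 1 := by positivity
    have := hfr _ (hmem _ hs i)
    rw [f.map_smul, smul_eq_mul] at this
    rw [add_mul, div_mul_cancel₀ _ (ne_of_gt hpos), one_mul] at this
    linarith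
  · have h0f : f 0 = 0 := map_zero f
    calc (0:ℝ) < r := h0
    _ < f p := hrp

/-- Strong duality at the optimum: if `x` is optimal for the primal LP
`min cᵀx s.t. Ax ≤ b, Gx = h` and `(lam, nu)` with `lam ≤ 0` is optimal for the dual
`max bᵀλ + hᵀν s.t. Aᵀλ + Gᵀν = c, λ ≤ 0`, then the objective values agree. -/
theorem stmt_0 {D M1 M2 : ℕ}
    (A : Matrix (Fin M1) (Fin D) ℝ) (b : Fin M1 → ℝ)
    (G : Matrix (Fin M2) (Fin D) ℝ) (h : Fin M2 → ℝ) (c : Fin D → ℝ)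
    (x : Fin D → ℝ) (lam : Fin M1 → ℝ) (nu : Fin M2 → ℝ)
    (hxfeas : A.mulVec x ≤ b ∧ G.mulVec x = h)
    (hxopt : ∀ y : Fin D → ℝ, A.mulVec y ≤ b → G.mulVec y = h → c ⬝ᵥ x ≤ c ⬝ᵥ y)
    (hdfeas : Aᵀ.mulVec lam + Gᵀ.mulVec nu = c ∧ lam ≤ 0)
    (hdopt : ∀ (l : Fin M1 → ℝ) (n : Fin M2 → ℝ),
      Aᵀ.mulVec l + Gᵀ.mulVec n = c → l ≤ 0 →
      b ⬝ᵥ l + h ⬝ᵥ n ≤ b ⬝ᵥ lam + h ⬝ᵥ nu) :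
    c ⬝ᵥ x = b ⬝ᵥ lam + h ⬝ᵥ nu := by
  obtain ⟨hAx, hGx⟩ := hxfeas
  obtain ⟨hdual, hlam⟩ := hdfeas
  -- weak duality
  have weak : b ⬝ᵥ lam + h ⬝ᵥ nu ≤ c ⬝ᵥ x := by
    have h1 : c ⬝ᵥ x = lam ⬝ᵥ A.mulVec x + nu ⬝ᵥ G.mulVec x := by
      rw [← hdual, add_dotProduct, Matrix.mulVec_transpose, Matrix.mulVec_transpose,
        Matrix.dotProduct_mulVec, Matrix.dotProduct_mulVec]
    have h2 : lam ⬝ᵥ b ≤ lam ⬝ᵥ A.mulVec x := by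
      apply Finset.sum_le_sum
      intro i _
      exact mul_le_mul_of_nonpos_left (hAx i) (hlam i)
    have h3 : nu ⬝ᵥ G.mulVec x = nu ⬝ᵥ h := by rw [hGx]
    rw [h1, h3]
    calc b ⬝ᵥ lam + h ⬝ᵥ nu = lam ⬝ᵥ b + nu ⬝ᵥ h := by
          rw [dotProduct_comm, dotProduct_comm h]
    _ ≤ lam ⬝ᵥ A.mulVec x + nu ⬝ᵥ h := by linarith
  -- strong duality: exhibit a dual feasible point with value ≥ c ⬝ᵥ x
  have strong : ∃ (l : Fin M1 → ℝ) (n : Fin M2 → ℝ),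
      Aᵀ.mulVec l + Gᵀ.mulVec n = c ∧ l ≤ 0 ∧ c ⬝ᵥ x ≤ b ⬝ᵥ l + h ⬝ᵥ n := by
    classical
    set v : (Fin M1 ⊕ (Fin M2 ⊕ (Fin M2 ⊕ Unit))) → ((Fin D → ℝ) × ℝ) :=
      Sum.elim (fun i => (-(A i), -(b i)))
        (Sum.elim (fun j => (G j, h j))
          (Sum.elim (fun j => (-(G j), -(h j))) (fun _ : Unit => (0, -1)))) with hv
    have hmem : ((c, c ⬝ᵥ x) : (Fin D → ℝ) × ℝ) ∈ coneOf v := by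
      by_contra hnot
      obtain ⟨f, hfle, hfpos⟩ :=
        cone_separation v _ (coneOf_closed' v (cone_caratheodory v Finset.univ)) hnot
      set y : Fin D → ℝ := fun j => f ((Pi.single j 1 : Fin D → ℝ), (0:ℝ)) with hy
      set τ : ℝ := f ((0 : Fin D → ℝ), (1:ℝ)) with hτ
      have feval : ∀ (w : Fin D → ℝ) (s : ℝ), f (w, s) = y ⬝ᵥ w + τ * s := by
        intro w s
        have hdecomp : ((w, s) : (Fin D → ℝ) × ℝ)
            = (∑ j : Fin D, w j • (((Pi.single j 1 : Fin D → ℝ), (0:ℝ)) : (Fin D → ℝ) × ℝ))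
              + s • (((0 : Fin D → ℝ), (1:ℝ)) : (Fin D → ℝ) × ℝ) := by
          refine Prod.ext ?_ ?_
          · simp only [Prod.fst_add, Prod.fst_sum, Prod.smul_fst, Prod.smul_snd, smul_zero]
            have : ∀ j : Fin D, w j • (Pi.single j 1 : Fin D → ℝ) = Pi.single j (w j) := by
              intro j; funext k
              by_cases hk : k = j <;> simp [Pi.single_apply, hk]
            simp only [this, Finset.univ_sum_single, smul_zero, add_zero]
          · simp only [Prod.snd_add, Prod.snd_sum, Prod.smul_snd, smul_eq_mul,
              mul_zero, mul_one, Finset.sum_const_zero, zero_add]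
        rw [hdecomp, map_add, map_sum, f.map_smul]
        simp only [smul_eq_mul]
        have : ∀ j : Fin D, f (w j • (((Pi.single j 1 : Fin D → ℝ), (0:ℝ)) : (Fin D → ℝ) × ℝ))
            = w j * y j := fun j => by rw [f.map_smul]; simp [hy]
        rw [Finset.sum_congr rfl fun j _ => this j]
        rw [← hτ, dotProduct]
        rw [Finset.sum_congr rfl fun j (_ : j ∈ Finset.univ) => mul_comm (w j) (y j)]
        ring
      have hτ0 : 0 ≤ τ := by
        have := hfle (Sum.inr (Sum.inr (Sum.inr ())))
        rw [hv] at this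
        simp only [Sum.elim_inr] at this
        rw [feval 0 (-1)] at this
        simp only [dotProduct_zero, zero_add] at this
        linarith
      have hA : ∀ i, 0 ≤ y ⬝ᵥ A i + τ * b i := by
        intro i
        have := hfle (Sum.inl i)
        rw [hv] at this
        simp only [Sum.elim_inl] at this
        rw [feval _ _] at this
        rw [dotProduct_neg] at this
        linarith
      have hG : ∀ j, y ⬝ᵥ G j + τ * h j = 0 := by
        intro j
        have h1 := hfle (Sum.inr (Sum.inl j))
        have h2 := hfle (Sum.inr (Sum.inr (Sum.inl j)))
        rw [hv] at h1 h2
        simp only [Sum.elim_inl, Sum.elim_inr] at h1 h2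
        rw [feval _ _] at h1
        rw [feval _ _] at h2
        rw [dotProduct_neg] at h2
        linarith
      have hposc : 0 < y ⬝ᵥ c + τ * (c ⬝ᵥ x) := by
        rw [feval _ _] at hfpos; exact hfpos
      rcases eq_or_lt_of_le hτ0 with hτz | hτp
      · -- τ = 0 : move from x in direction -y
        set z : Fin D → ℝ := x - y with hz
        have hAz : A.mulVec z ≤ b := by
          intro i
          have h1 : A.mulVec z i = A.mulVec x i - A.mulVec y i := by
            rw [hz, Matrix.mulVec_sub]; rfl
          have h2 : 0 ≤ A.mulVec y i := by
            have := hA i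
            rw [← hτz] at this
            simpa [Matrix.mulVec, dotProduct_comm] using this
          have := hAx i
          rw [h1]; dsimp only; linarith
        have hGz : G.mulVec z = h := by
          funext j
          have h1 : G.mulVec z j = G.mulVec x j - G.mulVec y j := by
            rw [hz, Matrix.mulVec_sub]; rfl
          have h2 : G.mulVec y j = 0 := by
            have := hG j
            rw [← hτz] at this
            simpa [Matrix.mulVec, dotProduct_comm] using this
          rw [h1, h2, sub_zero, hGx]
        have hcz : c ⬝ᵥ z < c ⬝ᵥ x := by
          have h2 : 0 < c ⬝ᵥ y := by
            have := hposc
            rw [← hτz] at this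
            simpa [dotProduct_comm] using this
          rw [hz, dotProduct_sub]
          linarith
        exact absurd (hxopt z hAz hGz) (not_le.2 hcz)
      · -- τ > 0 : z = -(1/τ) • y
        set z : Fin D → ℝ := (-(τ⁻¹)) • y with hz
        have hAz : A.mulVec z ≤ b := by
          intro i
          have h1 : A.mulVec z i = (-(τ⁻¹)) * A.mulVec y i := by
            rw [hz, Matrix.mulVec_smul]; rfl
          have h2 : A.mulVec y i = y ⬝ᵥ A i := by
            simp [Matrix.mulVec, dotProduct_comm]
          have h4 : 0 ≤ τ⁻¹ * (y ⬝ᵥ A i) + b i := by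
            have h5 := mul_nonneg (inv_pos.2 hτp).le (hA i)
            rw [mul_add, ← mul_assoc, inv_mul_cancel₀ (ne_of_gt hτp), one_mul] at h5
            exact h5
          rw [h1, h2]; linarith
        have hGz : G.mulVec z = h := by
          funext j
          have h1 : G.mulVec z j = (-(τ⁻¹)) * G.mulVec y j := by
            rw [hz, Matrix.mulVec_smul]; rfl
          have h2 : G.mulVec y j = y ⬝ᵥ G j := by
            simp [Matrix.mulVec, dotProduct_comm]
          have h3 : y ⬝ᵥ G j = -(τ * h j) := by linarith [hG j]
          rw [h1, h2, h3]
          field_simp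
        have hcz : c ⬝ᵥ z < c ⬝ᵥ x := by
          have h1 : c ⬝ᵥ z = (-(τ⁻¹)) * (c ⬝ᵥ y) := by
            rw [hz, dotProduct_smul]; rfl
          have h2 : c ⬝ᵥ y = y ⬝ᵥ c := dotProduct_comm _ _
          have h4 : 0 < τ⁻¹ * (y ⬝ᵥ c) + c ⬝ᵥ x := by
            have h5 := mul_pos (inv_pos.2 hτp) hposc
            rw [mul_add, ← mul_assoc, inv_mul_cancel₀ (ne_of_gt hτp), one_mul] at h5
            exact h5
          rw [h1, h2]; linarith
        exact absurd (hxopt z hAz hGz) (not_le.2 hcz)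
    obtain ⟨t, ht0, hteq⟩ := hmem
    have h1 := congrArg Prod.fst hteq
    have h2 := congrArg Prod.snd hteq
    simp only [hv, Prod.fst_sum, Prod.snd_sum, Prod.smul_fst, Prod.smul_snd,
      Prod.fst_add, Prod.snd_add, Fintype.sum_sum_type, Sum.elim_inl, Sum.elim_inr,
      Finset.univ_unique, Finset.sum_singleton, smul_eq_mul, smul_zero, smul_neg] at h1 h2
    refine ⟨fun i => -(t (Sum.inl i)),
      fun j => t (Sum.inr (Sum.inl j)) - t (Sum.inr (Sum.inr (Sum.inl j))), ?_, ?_, ?_⟩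
    · funext k
      have hk := congrFun h1 k
      simp only [Finset.sum_apply, Pi.add_apply, Pi.smul_apply, Pi.neg_apply, Pi.zero_apply,
        smul_eq_mul, mul_neg, neg_mul, Finset.sum_neg_distrib, add_zero, smul_zero,
        mul_comm] at hk
      simp only [Pi.add_apply, Matrix.mulVec, dotProduct, Matrix.transpose_apply,
        mul_neg, neg_mul, sub_mul, mul_sub, Finset.sum_sub_distrib, Finset.sum_neg_distrib,
        mul_comm]
      linarith [hk]
    · intro i
      simp only [Pi.zero_apply]
      have := ht0 (Sum.inl i)
      linarith
    · have ht4 := ht0 (Sum.inr (Sum.inr (Sum.inr default)))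
      simp only [dotProduct, mul_neg, neg_mul, mul_one, mul_sub, sub_mul, add_zero,
        Finset.sum_sub_distrib, Finset.sum_neg_distrib, mul_comm] at h2 ⊢
      linarith [h2]
  obtain ⟨l, n, hln, hl0, hval⟩ := strong
  exact le_antisymm (le_trans hval (hdopt l n hln hl0)) weak
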